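/- Let K be a complex Hilbert space and let d : [0,1] → B(K) be a norm-continuous path such that each d(t) is unitary and d(t) + Id is a Fredholm operator. Then there exist a partition 0 = t₀ < t₁ < ⋯ < t_N = 1 and real numbers ε_j with 0 < ε_j < π (j = 1, …, N) such that for every j and every t ∈ [t_{j−1}, t_j]: both e^{i(π+ε_j)} and e^{i(π−ε_j)} lie in the resolvent set of d(t), and the subspace spanned by the union over θ ∈ [−ε_j, ε_j] of the kernels ker(d(t) − e^{i(π+θ)} Id) is finite-dimensional. -/

import Mathlib

open scoped ComplexInnerProductSpace

section SpectralGapAux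


variable {K : Type*} [NormedAddCommGroup K] [InnerProductSpace ℂ K] [CompleteSpace K]

lemma eigen_orth' (A : K →L[ℂ] K) (hA : ∀ x y : K, ⟪A x, A y⟫ = ⟪x, y⟫)
    {lam rho : ℂ} (hne : lam ≠ rho) {u v : K} (hu : A u = lam • u) (hv : A v = rho • v) :
    ⟪u, v⟫ = 0 := by
  by_contra h
  have h1 : ⟪u, v⟫ = (starRingEnd ℂ) lam * rho * ⟪u, v⟫ := by
    conv_lhs => rw [← hA u v]
    rw [hu, hv, inner_smul_left, inner_smul_right]; ring
  have h2 : (starRingEnd ℂ) lam * rho = 1 := by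
    have h3 : ((starRingEnd ℂ) lam * rho - 1) * ⟪u, v⟫ = 0 := by linear_combination -h1
    rcases mul_eq_zero.1 h3 with h4 | h4
    · exact sub_eq_zero.1 h4
    · exact absurd h4 h
  have hu0 : u ≠ 0 := by
    rintro rfl
    exact h (inner_zero_left v)
  have h5 : ⟪u, u⟫ = (starRingEnd ℂ) lam * lam * ⟪u, u⟫ := by
    conv_lhs => rw [← hA u u]
    rw [hu, inner_smul_left, inner_smul_right]; ring
  have h7 : (starRingEnd ℂ) lam * lam = 1 := by
    have h6 : ((starRingEnd ℂ) lam * lam - 1) * ⟪u, u⟫ = 0 := by linear_combination -h5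
    rcases mul_eq_zero.1 h6 with h4 | h4
    · exact sub_eq_zero.1 h4
    · exact absurd (inner_self_eq_zero.1 h4) hu0
  have hc0 : (starRingEnd ℂ) lam ≠ 0 := by
    intro hh; rw [hh, zero_mul] at h7; exact zero_ne_one h7
  exact hne (mul_left_cancel₀ hc0 (h7.trans h2.symm))

lemma norm_sum_sq' {ι : Type*} (F : Finset ι) (g : ι → K)
    (h : ∀ i ∈ F, ∀ j ∈ F, i ≠ j → ⟪g i, g j⟫ = 0) :
    ‖∑ i ∈ F, g i‖ ^ 2 = ∑ i ∈ F, ‖g i‖ ^ 2 := by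
  have key : ⟪∑ i ∈ F, g i, ∑ j ∈ F, g j⟫ = ∑ i ∈ F, ⟪g i, g i⟫ := by
    rw [sum_inner]
    refine Finset.sum_congr rfl fun i hi => ?_
    rw [inner_sum, Finset.sum_eq_single_of_mem i hi]
    intro j hj hji
    exact h i hi j hj (Ne.symm hji)
  calc ‖∑ i ∈ F, g i‖ ^ 2 = RCLike.re ⟪∑ i ∈ F, g i, ∑ j ∈ F, g j⟫ := by
        rw [inner_self_eq_norm_sq (𝕜 := ℂ)]
    _ = ∑ i ∈ F, RCLike.re ⟪g i, g i⟫ := by rw [key, map_sum]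
    _ = ∑ i ∈ F, ‖g i‖ ^ 2 := Finset.sum_congr rfl fun i _ => inner_self_eq_norm_sq (𝕜 := ℂ) _

lemma mem_iSup_decompose' {ι : Type*} [DecidableEq ι] (E : ι → Submodule ℂ K) {x : K}
    (hx : x ∈ ⨆ i, E i) :
    ∃ (F : Finset ι) (f : ι → K), (∀ i ∈ F, f i ∈ E i) ∧ x = ∑ i ∈ F, f i := by
  induction hx using Submodule.iSup_induction' with
  | mem i y hy => exact ⟨{i}, fun _ => y, by simpa using hy, by simp⟩
  | zero => exact ⟨∅, 0, by simp, by simp⟩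
  | add y z hy hz ihy ihz =>
  obtain ⟨F1, f1, hf1, rfl⟩ := ihy
  obtain ⟨F2, f2, hf2, rfl⟩ := ihz
  refine ⟨F1 ∪ F2, fun i => (if i ∈ F1 then f1 i else 0) + (if i ∈ F2 then f2 i else 0), ?_, ?_⟩
  · intro i _
    apply Submodule.add_mem
    · split
      · exact hf1 _ ‹_›
      · exact Submodule.zero_mem _
    · split
      · exact hf2 _ ‹_›
      · exact Submodule.zero_mem _
  · rw [Finset.sum_add_distrib, Finset.sum_ite_mem, Finset.sum_ite_mem,
      Finset.union_inter_cancel_left, Finset.union_inter_cancel_right]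
open scoped ComplexInnerProductSpace

lemma bounded_below' {E F : Type*} [NormedAddCommGroup E] [NormedAddCommGroup F]
    [NormedSpace ℂ E] [NormedSpace ℂ F] [CompleteSpace E] [CompleteSpace F]
    (f : E →L[ℂ] F) (hinj : Function.Injective f) (hclosed : IsClosed (Set.range f)) :
    ∃ c > 0, ∀ x, c * ‖x‖ ≤ ‖f x‖ := by
  haveI : CompleteSpace ↥(LinearMap.range (f : E →ₗ[ℂ] F)) := by
    have : (LinearMap.range (f : E →ₗ[ℂ] F) : Set F) = Set.range f := LinearMap.coe_range _
    rw [← this] at hclosed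
    exact hclosed.completeSpace_coe
  set g := f.codRestrict (LinearMap.range (f : E →ₗ[ℂ] F)) (fun x => LinearMap.mem_range_self (f : E →ₗ[ℂ] F) x) with hg
  have hker : g.ker = ⊥ := by
    rw [ContinuousLinearMap.ker_codRestrict]
    exact LinearMap.ker_eq_bot.2 hinj
  have hrange : g.range = ⊤ := by
    rw [eq_top_iff]
    rintro ⟨y, x, rfl⟩ -
    exact ⟨x, rfl⟩
  set e := ContinuousLinearEquiv.ofBijective g hker hrange with he
  refine ⟨(‖(e.symm : ↥(LinearMap.range (f : E →ₗ[ℂ] F)) →L[ℂ] E)‖ + 1)⁻¹, by positivity, fun x => ?_⟩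
  rw [inv_mul_le_iff₀ (by positivity)]
  calc ‖x‖ = ‖e.symm (e x)‖ := by rw [e.symm_apply_apply]
    _ ≤ ‖(e.symm : ↥(LinearMap.range (f : E →ₗ[ℂ] F)) →L[ℂ] E)‖ * ‖e x‖ :=
        (e.symm : ↥(LinearMap.range (f : E →ₗ[ℂ] F)) →L[ℂ] E).le_opNorm (e x)
    _ ≤ (‖(e.symm : ↥(LinearMap.range (f : E →ₗ[ℂ] F)) →L[ℂ] E)‖ + 1) * ‖e x‖ := by
        have : (0:ℝ) ≤ ‖e x‖ := norm_nonneg _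
        nlinarith [norm_nonneg (e.symm : ↥(LinearMap.range (f : E →ₗ[ℂ] F)) →L[ℂ] E)]
    _ = (‖(e.symm : ↥(LinearMap.range (f : E →ₗ[ℂ] F)) →L[ℂ] E)‖ + 1) * ‖f x‖ := by
        rfl

set_option maxHeartbeats 1600000 in
lemma key_lemma (d : ℝ → K →L[ℂ] K) (hd : ContinuousOn d (Set.Icc (0 : ℝ) 1))
    (hunit : ∀ t ∈ Set.Icc (0 : ℝ) 1,
      (∀ x y : K, ⟪d t x, d t y⟫ = ⟪x, y⟫) ∧ Function.Bijective ⇑(d t))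
    (hfred : ∀ t ∈ Set.Icc (0 : ℝ) 1,
      FiniteDimensional ℂ ↥(LinearMap.ker ((d t + 1 : K →L[ℂ] K) : K →ₗ[ℂ] K)) ∧
      IsClosed ((LinearMap.range ((d t + 1 : K →L[ℂ] K) : K →ₗ[ℂ] K) : Submodule ℂ K) : Set K) ∧
      FiniteDimensional ℂ (K ⧸ LinearMap.range ((d t + 1 : K →L[ℂ] K) : K →ₗ[ℂ] K)))
    {t : ℝ} (ht : t ∈ Set.Icc (0 : ℝ) 1) :
    ∃ ε : ℝ, 0 < ε ∧ ε < Real.pi ∧ ∃ V : Set ℝ, IsOpen V ∧ t ∈ V ∧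
      ∀ s ∈ V ∩ Set.Icc (0 : ℝ) 1,
        Complex.exp ((Real.pi + ε) * Complex.I) ∈ resolventSet ℂ (d s) ∧
        Complex.exp ((Real.pi - ε) * Complex.I) ∈ resolventSet ℂ (d s) ∧
        FiniteDimensional ℂ
          ↥(⨆ θ ∈ Set.Icc (-ε) ε,
              LinearMap.ker ((d s - Complex.exp ((Real.pi + θ) * Complex.I) •
                (1 : K →L[ℂ] K) : K →L[ℂ] K) : K →ₗ[ℂ] K)) := by
  classical
  obtain ⟨hDinner, hDbij⟩ := hunit t ht
  obtain ⟨hMfin, hRclosed, -⟩ := hfred t ht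
  set D := d t with hDdef
  set M : Submodule ℂ K := LinearMap.ker ((D + 1 : K →L[ℂ] K) : K →ₗ[ℂ] K) with hMdef
  haveI : FiniteDimensional ℂ ↥M := hMfin
  -- D acts as -1 on M
  have hDm : ∀ m ∈ M, D m = -m := by
    intro m hm
    have h0 : (D + 1) m = 0 := hm
    rw [ContinuousLinearMap.add_apply, ContinuousLinearMap.one_apply] at h0
    exact eq_neg_of_add_eq_zero_left h0
  -- (D + 1) maps everything into Mᗮ
  have hDperp : ∀ z : K, (D + 1) z ∈ Mᗮ := by
    intro z
    rw [Submodule.mem_orthogonal]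
    intro m hm
    have h1 : ⟪m, D z⟫ = -⟪m, z⟫ := by
      have h2 : ⟪D m, D z⟫ = ⟪m, z⟫ := hDinner m z
      rw [hDm m hm, inner_neg_left] at h2
      linear_combination -h2
    rw [ContinuousLinearMap.add_apply, ContinuousLinearMap.one_apply, inner_add_right, h1]
    ring
  -- the lower bound c on Mᗮ
  obtain ⟨c, hc0, hc⟩ := bounded_below' ((D + 1).comp (Mᗮ.subtypeL))
    (by
      intro y z hyz
      simp only [ContinuousLinearMap.comp_apply, Submodule.subtypeL_apply] at hyz
      have hmem : ((y : K) - (z : K)) ∈ M := by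
        have : (D + 1) ((y : K) - (z : K)) = 0 := by rw [map_sub, hyz, sub_self]
        exact LinearMap.mem_ker.mpr this
      have hmem2 : ((y : K) - (z : K)) ∈ Mᗮ := Submodule.sub_mem _ y.2 z.2
      have : ⟪(y : K) - (z : K), (y : K) - (z : K)⟫ = 0 :=
        Submodule.inner_right_of_mem_orthogonal hmem hmem2
      have := inner_self_eq_zero.1 this
      exact Subtype.ext (sub_eq_zero.1 this))
    (by
      have hset : Set.range ⇑((D + 1).comp (Mᗮ.subtypeL)) =
          ((LinearMap.range ((D + 1 : K →L[ℂ] K) : K →ₗ[ℂ] K) : Submodule ℂ K) : Set K) := by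
        ext w
        constructor
        · rintro ⟨y, rfl⟩
          exact ⟨(y : K), rfl⟩
        · rintro ⟨z, rfl⟩
          refine ⟨⟨z - (M.orthogonalProjectionOnto z : K),
            Submodule.sub_starProjection_mem_orthogonal z⟩, ?_⟩
          have hPz : ((M.orthogonalProjectionOnto z : K)) ∈ M := (M.orthogonalProjectionOnto z).2
          have : (D + 1) ((M.orthogonalProjectionOnto z : K)) = 0 := hPz
          simp only [ContinuousLinearMap.comp_apply, Submodule.subtypeL_apply, map_sub, this,
            sub_zero, ContinuousLinearMap.coe_coe]
      rw [hset]
      exact hRclosed)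
  have hcM : ∀ z ∈ Mᗮ, c * ‖z‖ ≤ ‖(D + 1) z‖ := by
    intro z hz
    simpa using hc ⟨z, hz⟩
  -- choose ε
  set ε := min (c / 8) (2⁻¹ : ℝ) with hεdef
  have hε0 : 0 < ε := lt_min (by linarith) (by norm_num)
  have hεhalf : ε ≤ 2⁻¹ := min_le_right _ _
  have hεc : ε ≤ c / 8 := min_le_left _ _
  have hεπ : ε < Real.pi := lt_of_le_of_lt hεhalf (by linarith [Real.pi_gt_three])
  -- exp facts
  have hexp : ∀ θ : ℝ, Complex.exp (((Real.pi : ℂ) + (θ : ℂ)) * Complex.I) + 1 =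
      1 - Complex.exp ((θ : ℂ) * Complex.I) := by
    intro θ
    push_cast
    rw [add_mul, Complex.exp_add, Complex.exp_pi_mul_I]
    ring
  have habs1 : ∀ θ : ℝ, |θ| ≤ 1 →
      ‖Complex.exp (((Real.pi : ℂ) + (θ : ℂ)) * Complex.I) + 1‖ ≤ 2 * |θ| := by
    intro θ hθ
    rw [hexp, ← neg_sub, norm_neg]
    have h3 : ‖(θ : ℂ) * Complex.I‖ ≤ 1 := by
      rwa [norm_mul, Complex.norm_I, mul_one, Complex.norm_real, Real.norm_eq_abs]
    have := Complex.norm_exp_sub_one_le h3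
    rwa [norm_mul, Complex.norm_I, mul_one, Complex.norm_real, Real.norm_eq_abs] at this
  have hne1 : ∀ θ : ℝ, 0 < |θ| → |θ| ≤ 1 →
      Complex.exp (((Real.pi : ℂ) + (θ : ℂ)) * Complex.I) + 1 ≠ 0 := by
    intro θ hθ0 hθ1 hcontra
    rw [hexp, sub_eq_zero] at hcontra
    have := Complex.exp_eq_one_iff.1 hcontra.symm
    obtain ⟨n, hn⟩ := this
    have h4 : (θ : ℂ) = (n : ℂ) * (2 * (Real.pi : ℂ)) :=
      mul_right_cancel₀ Complex.I_ne_zero (by linear_combination hn)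
    have h5 : θ = (n : ℝ) * (2 * Real.pi) := by exact_mod_cast h4
    rcases eq_or_ne n 0 with rfl | hn0
    · rw [h5] at hθ0; simp at hθ0
    · have h6 : (1 : ℝ) ≤ |(n : ℝ)| := by exact_mod_cast Int.one_le_abs hn0
      have h7 : |θ| = |(n : ℝ)| * (2 * Real.pi) := by
        rw [h5, abs_mul, abs_of_nonneg (by positivity : (0:ℝ) ≤ 2 * Real.pi)]
      nlinarith [Real.pi_gt_three]
  have hinj_exp : ∀ θ1 θ2 : ℝ, |θ1| ≤ 1 → |θ2| ≤ 1 →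
      Complex.exp (((Real.pi : ℂ) + (θ1 : ℂ)) * Complex.I) =
        Complex.exp (((Real.pi : ℂ) + (θ2 : ℂ)) * Complex.I) → θ1 = θ2 := by
    intro θ1 θ2 h1 h2 heq
    rw [Complex.exp_eq_exp_iff_exists_int] at heq
    obtain ⟨n, hn⟩ := heq
    have h4 : (θ1 : ℂ) = (θ2 : ℂ) + (n : ℂ) * (2 * (Real.pi : ℂ)) :=
      mul_right_cancel₀ Complex.I_ne_zero (by push_cast at hn ⊢; linear_combination hn)
    have h5 : θ1 = θ2 + (n : ℝ) * (2 * Real.pi) := by exact_mod_cast h4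
    rcases eq_or_ne n 0 with rfl | hn0
    · simpa using h5
    · exfalso
      have h6 : (1 : ℝ) ≤ |(n : ℝ)| := by exact_mod_cast Int.one_le_abs hn0
      have h7 : |θ1 - θ2| = |(n : ℝ)| * (2 * Real.pi) := by
        rw [h5]; rw [show θ2 + (n:ℝ) * (2*Real.pi) - θ2 = (n:ℝ) * (2*Real.pi) by ring,
          abs_mul, abs_of_nonneg (by positivity : (0:ℝ) ≤ 2 * Real.pi)]
      have h8 : |θ1 - θ2| ≤ 2 := by
        calc |θ1 - θ2| ≤ |θ1| + |θ2| := abs_sub _ _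
          _ ≤ 2 := by linarith
      nlinarith [Real.pi_gt_three]
  -- resolvent at t
  have hres : ∀ lam : ℂ, ‖lam‖ = 1 → lam + 1 ≠ 0 → ‖lam + 1‖ < c / 2 →
      IsUnit (algebraMap ℂ (K →L[ℂ] K) lam - D) := by
    intro lam habs hmu0 hmuc
    set B : K →L[ℂ] K := algebraMap ℂ (K →L[ℂ] K) lam - D with hB
    have hBapp : ∀ x : K, B x = lam • x - D x := by
      intro x
      rw [hB]
      simp [Algebra.algebraMap_eq_smul_one]
    set mu := lam + 1 with hmu
    set m0 := min (‖mu‖) (c - ‖mu‖) with hm0def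
    have habsmu : 0 < ‖mu‖ := norm_pos_iff.2 hmu0
    have hm0 : 0 < m0 := lt_min habsmu (by linarith)
    have hlow : ∀ x : K, m0 * ‖x‖ ≤ ‖B x‖ := by
      intro x
      set u : K := (M.orthogonalProjectionOnto x : K) with hudef
      have hu : u ∈ M := (M.orthogonalProjectionOnto x).2
      set y := x - u with hydef
      have hy : y ∈ Mᗮ := Submodule.sub_starProjection_mem_orthogonal x
      have hxuy : x = u + y := by rw [hydef]; abel
      have hBu : B u = mu • u := by
        rw [hBapp, hDm u hu, sub_neg_eq_add, hmu, add_smul, one_smul]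
      have hBy : B y = mu • y - (D + 1) y := by
        rw [hBapp, hmu, add_smul, one_smul, ContinuousLinearMap.add_apply,
          ContinuousLinearMap.one_apply]
        abel
      have hByperp : B y ∈ Mᗮ := by
        rw [hBy]; exact Submodule.sub_mem _ (Submodule.smul_mem _ _ hy) (hDperp y)
      have hBuM : B u ∈ M := by rw [hBu]; exact Submodule.smul_mem _ _ hu
      have horth : ⟪B u, B y⟫ = 0 := Submodule.inner_right_of_mem_orthogonal hBuM hByperp
      have horth2 : ⟪u, y⟫ = 0 := Submodule.inner_right_of_mem_orthogonal hu hy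
      have h1 : ‖B x‖ ^ 2 = ‖B u‖ ^ 2 + ‖B y‖ ^ 2 := by
        rw [hxuy, map_add, @norm_add_sq ℂ, horth]
        simp
      have h2 : ‖x‖ ^ 2 = ‖u‖ ^ 2 + ‖y‖ ^ 2 := by
        rw [hxuy, @norm_add_sq ℂ, horth2]
        simp
      have h3 : ‖B u‖ = ‖mu‖ * ‖u‖ := by
        rw [hBu, norm_smul]
      have h4 : (c - ‖mu‖) * ‖y‖ ≤ ‖B y‖ := by
        have h5 := hcM y hy
        have hny : ‖mu • y‖ = ‖mu‖ * ‖y‖ := by rw [norm_smul]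
        calc (c - ‖mu‖) * ‖y‖ = c * ‖y‖ - ‖mu‖ * ‖y‖ := by ring
          _ ≤ ‖(D + 1) y‖ - ‖mu • y‖ := by rw [hny]; linarith
          _ ≤ ‖mu • y - (D + 1) y‖ := by
              have := norm_sub_norm_le ((D + 1) y) (mu • y)
              have h6 := norm_sub_rev ((D+1) y) (mu • y)
              linarith [norm_sub_norm_le ((D+1) y) (mu • y), norm_sub_rev ((D+1) y) (mu • y)]
          _ = ‖B y‖ := by rw [hBy]
      have hm1 : m0 ≤ ‖mu‖ := min_le_left _ _
      have hm2 : m0 ≤ c - ‖mu‖ := min_le_right _ _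
      have k1 : ‖B u‖ ^ 2 = (‖mu‖) ^ 2 * ‖u‖ ^ 2 := by rw [h3]; ring
      have k2 : ((c - ‖mu‖) * ‖y‖) ^ 2 ≤ ‖B y‖ ^ 2 :=
        pow_le_pow_left₀ (mul_nonneg (by linarith) (norm_nonneg _)) h4 2
      have k3 : m0 ^ 2 ≤ (‖mu‖) ^ 2 := pow_le_pow_left₀ hm0.le hm1 2
      have k4 : m0 ^ 2 ≤ (c - ‖mu‖) ^ 2 := pow_le_pow_left₀ hm0.le hm2 2
      have h5 : m0 ^ 2 * ‖x‖ ^ 2 ≤ ‖B x‖ ^ 2 := by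
        have j1 := mul_le_mul_of_nonneg_right k3 (sq_nonneg ‖u‖)
        have j2 := mul_le_mul_of_nonneg_right k4 (sq_nonneg ‖y‖)
        calc m0 ^ 2 * ‖x‖ ^ 2 = m0 ^ 2 * ‖u‖ ^ 2 + m0 ^ 2 * ‖y‖ ^ 2 := by rw [h2]; ring
          _ ≤ (‖mu‖) ^ 2 * ‖u‖ ^ 2 + ((c - ‖mu‖) * ‖y‖) ^ 2 := by
              have : ((c - ‖mu‖) * ‖y‖) ^ 2 = (c - ‖mu‖) ^ 2 * ‖y‖ ^ 2 := by
                ring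
              rw [this]
              linarith
          _ ≤ ‖B u‖ ^ 2 + ‖B y‖ ^ 2 := by rw [k1]; linarith
          _ = ‖B x‖ ^ 2 := h1.symm
      have h6 : (m0 * ‖x‖) ^ 2 ≤ ‖B x‖ ^ 2 := by rw [mul_pow]; exact h5
      calc m0 * ‖x‖ = Real.sqrt ((m0 * ‖x‖) ^ 2) :=
            (Real.sqrt_sq (by positivity)).symm
        _ ≤ Real.sqrt (‖B x‖ ^ 2) := Real.sqrt_le_sqrt h6
        _ = ‖B x‖ := Real.sqrt_sq (norm_nonneg _)
    have hanti : AntilipschitzWith (⟨m0⁻¹, by positivity⟩ : NNReal) ⇑B := by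
      apply AddMonoidHomClass.antilipschitz_of_bound
      intro x
      show ‖x‖ ≤ m0⁻¹ * ‖B x‖
      rw [inv_mul_eq_div, le_div_iff₀ hm0]
      calc ‖x‖ * m0 = m0 * ‖x‖ := by ring
        _ ≤ ‖B x‖ := hlow x
    have hBinj : Function.Injective ⇑B := hanti.injective
    have hclosedrange : IsClosed (Set.range ⇑B) := hanti.isClosed_range B.uniformContinuous
    have hkerbot : LinearMap.ker (B : K →ₗ[ℂ] K) = ⊥ := LinearMap.ker_eq_bot.2 hBinj
    have hsurj : LinearMap.range (B : K →ₗ[ℂ] K) = ⊤ := by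
      haveI : CompleteSpace ↥(LinearMap.range (B : K →ₗ[ℂ] K)) := by
        have hco : (LinearMap.range (B : K →ₗ[ℂ] K) : Set K) = Set.range ⇑B := LinearMap.coe_range _
        rw [show ((LinearMap.range (B : K →ₗ[ℂ] K) : Submodule ℂ K) : Set K) = Set.range ⇑B from hco] at *
        exact hclosedrange.completeSpace_coe
      have hperp0 : (LinearMap.range (B : K →ₗ[ℂ] K))ᗮ = ⊥ := by
        rw [Submodule.eq_bot_iff]
        intro z hz
        have hz' : ∀ x : K, ⟪B x, z⟫ = 0 := fun x =>
          (Submodule.mem_orthogonal _ z).1 hz _ ⟨x, rfl⟩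
        obtain ⟨u, hu⟩ := hDbij.2 z
        have hll : lam * (starRingEnd ℂ) lam = 1 := by
          rw [Complex.mul_conj, Complex.normSq_eq_norm_sq, habs]
          norm_num
        have h8 : ∀ x : K, ⟪x, u - ((starRingEnd ℂ) lam) • z⟫ = 0 := by
          intro x
          have e1 : ⟪D x, z⟫ = (starRingEnd ℂ) lam * ⟪x, z⟫ := by
            have e0 := hz' x
            rw [hBapp, inner_sub_left, inner_smul_left] at e0
            linear_combination -e0
          have e2 : ⟪x, u⟫ = ⟪D x, D u⟫ := (hDinner x u).symm
          rw [inner_sub_right, inner_smul_right, e2, hu, e1]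
          ring
        have h9 : u = ((starRingEnd ℂ) lam) • z := by
          have := h8 (u - ((starRingEnd ℂ) lam) • z)
          rwa [inner_self_eq_zero, sub_eq_zero] at this
        have hDz : D z = lam • z := by
          have hz2 : z = ((starRingEnd ℂ) lam) • D z := by
            conv_lhs => rw [← hu, h9, map_smul]
          calc D z = (1 : ℂ) • D z := (one_smul _ _).symm
            _ = (lam * (starRingEnd ℂ) lam) • D z := by rw [hll]
            _ = lam • (((starRingEnd ℂ) lam) • D z) := by rw [mul_smul]
            _ = lam • z := by rw [← hz2]
        have h10 : B z = 0 := by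
          rw [hBapp, hDz, sub_self]
        have h11 : B z = B 0 := by rw [h10, map_zero]
        exact hBinj h11
      exact Submodule.orthogonal_eq_bot_iff.1 hperp0
    set e := ContinuousLinearEquiv.ofBijective B hkerbot hsurj with he
    refine ⟨⟨B, (e.symm : K →L[ℂ] K), ?_, ?_⟩, rfl⟩
    · ext x
      simp only [ContinuousLinearMap.mul_apply, ContinuousLinearMap.one_apply,
        ContinuousLinearMap.coe_coe]
      exact ContinuousLinearEquiv.ofBijective_apply_symm_apply B hkerbot hsurj x
    · ext x
      simp only [ContinuousLinearMap.mul_apply, ContinuousLinearMap.one_apply,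
        ContinuousLinearMap.coe_coe]
      exact ContinuousLinearEquiv.ofBijective_symm_apply_apply B hkerbot hsurj x
  -- endpoint eigenvalues are in the resolvent set of D
  have hepsabs : |ε| ≤ 1 := by rw [abs_of_pos hε0]; linarith
  have hepsabsneg : |(-ε)| ≤ 1 := by rw [abs_neg, abs_of_pos hε0]; linarith
  set lamp := Complex.exp (((Real.pi : ℂ) + (ε : ℂ)) * Complex.I) with hlamp
  set lamm := Complex.exp (((Real.pi : ℂ) + ((-ε : ℝ) : ℂ)) * Complex.I) with hlamm
  have habsp : ‖lamp‖ = 1 := by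
    rw [hlamp]
    have : ((Real.pi : ℂ) + (ε : ℂ)) * Complex.I = ((Real.pi + ε : ℝ) : ℂ) * Complex.I := by
      push_cast; ring
    rw [this, Complex.norm_exp_ofReal_mul_I]
  have habsm : ‖lamm‖ = 1 := by
    rw [hlamm]
    have : ((Real.pi : ℂ) + ((-ε : ℝ) : ℂ)) * Complex.I = ((Real.pi + -ε : ℝ) : ℂ) * Complex.I := by
      push_cast; ring
    rw [this, Complex.norm_exp_ofReal_mul_I]
  have hUt1 : IsUnit (algebraMap ℂ (K →L[ℂ] K) lamp - D) := by
    apply hres lamp habsp (hne1 ε (abs_pos.2 hε0.ne') hepsabs)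
    have := habs1 ε hepsabs
    rw [abs_of_pos hε0] at this
    linarith
  have hUt2 : IsUnit (algebraMap ℂ (K →L[ℂ] K) lamm - D) := by
    apply hres lamm habsm (hne1 (-ε) (by rw [abs_neg, abs_pos]; exact hε0.ne') hepsabsneg)
    have := habs1 (-ε) hepsabsneg
    rw [abs_neg, abs_of_pos hε0] at this
    linarith
  -- eventual conditions near t
  have hcontat : ContinuousWithinAt d (Set.Icc (0:ℝ) 1) t := hd t ht
  have hev1 : ∀ᶠ s in nhdsWithin t (Set.Icc (0:ℝ) 1),
      IsUnit (algebraMap ℂ (K →L[ℂ] K) lamp - d s) := by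
    have hcont2 : ContinuousWithinAt (fun s => algebraMap ℂ (K →L[ℂ] K) lamp - d s)
        (Set.Icc (0:ℝ) 1) t := continuousWithinAt_const.sub hcontat
    exact hcont2 (Units.isOpen.mem_nhds hUt1)
  have hev2 : ∀ᶠ s in nhdsWithin t (Set.Icc (0:ℝ) 1),
      IsUnit (algebraMap ℂ (K →L[ℂ] K) lamm - d s) := by
    have hcont2 : ContinuousWithinAt (fun s => algebraMap ℂ (K →L[ℂ] K) lamm - d s)
        (Set.Icc (0:ℝ) 1) t := continuousWithinAt_const.sub hcontat
    exact hcont2 (Units.isOpen.mem_nhds hUt2)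
  have hev3 : ∀ᶠ s in nhdsWithin t (Set.Icc (0:ℝ) 1), ‖d s - D‖ < c / 4 := by
    have h0 : Filter.Tendsto (fun s => ‖d s - D‖) (nhdsWithin t (Set.Icc (0:ℝ) 1))
        (nhds ‖d t - D‖) := (hcontat.sub (continuousWithinAt_const (b := D))).norm
    have h0' : ‖d t - D‖ = 0 := by simp [hDdef]
    rw [h0'] at h0
    exact h0.eventually_lt_const (by positivity)
  have hev := (hev1.and (hev2.and hev3))
  rw [eventually_nhdsWithin_iff] at hev
  obtain ⟨V, hV, hVopen, hVt⟩ := eventually_nhds_iff.1 hev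
  refine ⟨ε, hε0, hεπ, V, hVopen, hVt, ?_⟩
  rintro s ⟨hsV, hsI⟩
  obtain ⟨hU1, hU2, hn3⟩ := hV s hsV hsI
  obtain ⟨hsinner, hsbij⟩ := hunit s hsI
  refine ⟨?_, ?_, ?_⟩
  · exact hU1
  · have hco : ((Real.pi : ℂ) - (ε : ℂ)) = ((Real.pi : ℂ) + ((-ε : ℝ) : ℂ)) := by
      push_cast; ring
    show IsUnit (algebraMap ℂ (K →L[ℂ] K) (Complex.exp (((Real.pi : ℂ) - (ε : ℂ)) * Complex.I)) - d s)
    rw [hco]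
    exact hU2
  · -- finite dimensionality of the clustered eigenspaces
    set W : Submodule ℂ K := ⨆ θ ∈ Set.Icc (-ε) ε,
      LinearMap.ker ((d s - Complex.exp (((Real.pi : ℂ) + (θ : ℂ)) * Complex.I) •
        (1 : K →L[ℂ] K) : K →L[ℂ] K) : K →ₗ[ℂ] K) with hWdef
    show FiniteDimensional ℂ ↥W
    set φ : ↥W →ₗ[ℂ] ↥M := (M.orthogonalProjectionOnto).toLinearMap.comp W.subtype with hφ
    have hφinj : ∀ x : ↥W, φ x = 0 → x = 0 := by
      intro x hx0
      have hxperp : (x : K) ∈ Mᗮ := by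
        have : M.orthogonalProjectionOnto (x : K) = 0 := hx0
        exact Submodule.orthogonalProjectionOnto_eq_zero_iff.1 this
      have hxW : (x : K) ∈ ⨆ (i : ↥(Set.Icc (-ε) ε)),
          LinearMap.ker ((d s - Complex.exp (((Real.pi : ℂ) + ((i : ℝ) : ℂ)) * Complex.I) •
            (1 : K →L[ℂ] K) : K →L[ℂ] K) : K →ₗ[ℂ] K) := by
        have hx2 : (x : K) ∈ (⨆ θ ∈ Set.Icc (-ε) ε,
            LinearMap.ker ((d s - Complex.exp (((Real.pi : ℂ) + (θ : ℂ)) * Complex.I) •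
              (1 : K →L[ℂ] K) : K →L[ℂ] K) : K →ₗ[ℂ] K)) := x.2
        rwa [iSup_subtype'] at hx2
      obtain ⟨F, f, hf, hxsum⟩ := mem_iSup_decompose' _ hxW
      -- eigen equations
      have hfe : ∀ i ∈ F, d s (f i) =
          Complex.exp (((Real.pi : ℂ) + ((i : ℝ) : ℂ)) * Complex.I) • f i := by
        intro i hi
        have h0 := hf i hi
        rw [LinearMap.mem_ker] at h0
        rw [ContinuousLinearMap.coe_coe, ContinuousLinearMap.sub_apply, ContinuousLinearMap.smul_apply,
          ContinuousLinearMap.one_apply] at h0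
        exact sub_eq_zero.1 h0
      have habsθ : ∀ i : ↥(Set.Icc (-ε) ε), |(i : ℝ)| ≤ ε := fun i =>
        abs_le.2 ⟨i.2.1, i.2.2⟩
      have habsθ1 : ∀ i : ↥(Set.Icc (-ε) ε), |(i : ℝ)| ≤ 1 := fun i =>
        le_trans (habsθ i) (by linarith)
      have horthF : ∀ i ∈ F, ∀ j ∈ F, i ≠ j → ⟪f i, f j⟫ = 0 := by
        intro i hi j hj hij
        refine eigen_orth' (d s) hsinner ?_ (hfe i hi) (hfe j hj)
        intro hcontra
        exact hij (Subtype.ext (hinj_exp _ _ (habsθ1 i) (habsθ1 j) hcontra))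
      -- norm bound for (d s + 1) x
      have hmap : (d s + 1) (x : K) = ∑ i ∈ F,
          (Complex.exp (((Real.pi : ℂ) + ((i : ℝ) : ℂ)) * Complex.I) + 1) • f i := by
        rw [hxsum, map_sum]
        refine Finset.sum_congr rfl fun i hi => ?_
        rw [ContinuousLinearMap.add_apply, ContinuousLinearMap.one_apply, hfe i hi, add_smul,
          one_smul]
      have horthF2 : ∀ i ∈ F, ∀ j ∈ F, i ≠ j →
          ⟪(Complex.exp (((Real.pi : ℂ) + ((i : ℝ) : ℂ)) * Complex.I) + 1) • f i,
           (Complex.exp (((Real.pi : ℂ) + ((j : ℝ) : ℂ)) * Complex.I) + 1) • f j⟫ = 0 := by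
        intro i hi j hj hij
        rw [inner_smul_left, inner_smul_right, horthF i hi j hj hij]
        ring
      have hb1 : ‖(d s + 1) (x : K)‖ ^ 2 ≤ (2 * ε) ^ 2 * ‖(x : K)‖ ^ 2 := by
        rw [hmap, norm_sum_sq' F _ horthF2]
        have hterm : ∀ i ∈ F,
            ‖(Complex.exp (((Real.pi : ℂ) + ((i : ℝ) : ℂ)) * Complex.I) + 1) • f i‖ ^ 2 ≤
              (2 * ε) ^ 2 * ‖f i‖ ^ 2 := by
          intro i hi
          rw [norm_smul, mul_pow]
          have ha := habs1 (i : ℝ) (habsθ1 i)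
          have ha2 : ‖Complex.exp (((Real.pi : ℂ) + ((i : ℝ) : ℂ)) * Complex.I) + 1‖
              ≤ 2 * ε := le_trans ha (by linarith [habsθ i])
          have := pow_le_pow_left₀ (norm_nonneg _) ha2 2
          exact mul_le_mul_of_nonneg_right this (sq_nonneg _)
        calc ∑ i ∈ F, ‖(Complex.exp (((Real.pi : ℂ) + ((i : ℝ) : ℂ)) * Complex.I) + 1) • f i‖ ^ 2
            ≤ ∑ i ∈ F, (2 * ε) ^ 2 * ‖f i‖ ^ 2 := Finset.sum_le_sum hterm
          _ = (2 * ε) ^ 2 * ∑ i ∈ F, ‖f i‖ ^ 2 := by rw [Finset.mul_sum]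
          _ = (2 * ε) ^ 2 * ‖(x : K)‖ ^ 2 := by rw [← norm_sum_sq' F f horthF, ← hxsum]
      have hb1' : ‖(d s + 1) (x : K)‖ ≤ 2 * ε * ‖(x : K)‖ := by
        have h6 : ‖(d s + 1) (x : K)‖ ^ 2 ≤ (2 * ε * ‖(x : K)‖) ^ 2 := by
          rw [mul_pow]; exact hb1
        calc ‖(d s + 1) (x : K)‖ = Real.sqrt (‖(d s + 1) (x : K)‖ ^ 2) :=
              (Real.sqrt_sq (norm_nonneg _)).symm
          _ ≤ Real.sqrt ((2 * ε * ‖(x : K)‖) ^ 2) := Real.sqrt_le_sqrt h6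
          _ = 2 * ε * ‖(x : K)‖ := Real.sqrt_sq (by positivity)
      -- combine with the lower bound on Mᗮ
      have hb2 : c * ‖(x : K)‖ ≤ ‖(D + 1) (x : K)‖ := hcM _ hxperp
      have hb3 : (D + 1) (x : K) = (D - d s) (x : K) + (d s + 1) (x : K) := by
        simp only [ContinuousLinearMap.add_apply, ContinuousLinearMap.sub_apply,
          ContinuousLinearMap.one_apply]
        abel
      have hb4 : ‖(D + 1) (x : K)‖ ≤ c / 4 * ‖(x : K)‖ + 2 * ε * ‖(x : K)‖ := by
        rw [hb3]
        calc ‖(D - d s) (x : K) + (d s + 1) (x : K)‖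
            ≤ ‖(D - d s) (x : K)‖ + ‖(d s + 1) (x : K)‖ := norm_add_le _ _
          _ ≤ c / 4 * ‖(x : K)‖ + 2 * ε * ‖(x : K)‖ := by
              have h7 : ‖(D - d s) (x : K)‖ ≤ ‖D - d s‖ * ‖(x : K)‖ :=
                (D - d s).le_opNorm _
              have h8 : ‖D - d s‖ = ‖d s - D‖ := norm_sub_rev _ _
              have h9 : ‖D - d s‖ * ‖(x : K)‖ ≤ c / 4 * ‖(x : K)‖ := by
                rw [h8]
                exact mul_le_mul_of_nonneg_right hn3.le (norm_nonneg _)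
              linarith [hb1']
      have hxnorm : ‖(x : K)‖ = 0 := by
        nlinarith [norm_nonneg (x : K)]
      have : (x : K) = 0 := norm_eq_zero.1 hxnorm
      exact Subtype.ext this
    have hinj : Function.Injective φ := by
      intro a b hab
      have := hφinj (a - b) (by rw [map_sub, hab, sub_self])
      exact sub_eq_zero.1 this
    exact FiniteDimensional.of_injective φ hinj


end SpectralGapAux

set_option maxHeartbeats 800000 in

/-- Along a norm-continuous path of unitaries `d(t)` with `d(t) + Id` Fredholm, there is a
partition `0 = t₀ < ⋯ < t_N = 1` and numbers `0 < ε_j < π` such that on each subinterval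
`[t_{j-1}, t_j]`, the points `e^{i(π ± ε_j)}` lie in the resolvent set of `d(t)` and the
span of the eigenspaces for eigenvalues `e^{i(π + θ)}`, `|θ| ≤ ε_j`, is finite-dimensional. -/
theorem exists_partition_and_spectral_gaps
    {K : Type*} [NormedAddCommGroup K] [InnerProductSpace ℂ K] [CompleteSpace K]
    (d : ℝ → K →L[ℂ] K) (hd : ContinuousOn d (Set.Icc (0 : ℝ) 1))
    (hunit : ∀ t ∈ Set.Icc (0 : ℝ) 1,
      (∀ x y : K, ⟪d t x, d t y⟫ = ⟪x, y⟫) ∧ Function.Bijective ⇑(d t))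
    (hfred : ∀ t ∈ Set.Icc (0 : ℝ) 1,
      FiniteDimensional ℂ ↥(LinearMap.ker ((d t + 1 : K →L[ℂ] K) : K →ₗ[ℂ] K)) ∧
      IsClosed ((LinearMap.range ((d t + 1 : K →L[ℂ] K) : K →ₗ[ℂ] K) : Submodule ℂ K) : Set K) ∧
      FiniteDimensional ℂ (K ⧸ LinearMap.range ((d t + 1 : K →L[ℂ] K) : K →ₗ[ℂ] K))) :
    ∃ (N : ℕ) (t : ℕ → ℝ) (ε : ℕ → ℝ), 0 < N ∧ t 0 = 0 ∧ t N = 1 ∧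
      (∀ j < N, t j < t (j + 1)) ∧
      ∀ j < N, 0 < ε j ∧ ε j < Real.pi ∧
        ∀ s ∈ Set.Icc (t j) (t (j + 1)),
          Complex.exp ((Real.pi + ε j) * Complex.I) ∈ resolventSet ℂ (d s) ∧
          Complex.exp ((Real.pi - ε j) * Complex.I) ∈ resolventSet ℂ (d s) ∧
          FiniteDimensional ℂ
            ↥(⨆ θ ∈ Set.Icc (-(ε j)) (ε j),
                LinearMap.ker ((d s - Complex.exp ((Real.pi + θ) * Complex.I) •
                  (1 : K →L[ℂ] K) : K →L[ℂ] K) : K →ₗ[ℂ] K)) := by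
  classical
  have hkey := fun i : ↥(Set.Icc (0:ℝ) 1) => key_lemma d hd hunit hfred i.2
  choose ε hε0 hεπ V hVopen hVt hVP using hkey
  have hcover : Set.Icc (0:ℝ) 1 ⊆ ⋃ i, V i := fun x hx =>
    Set.mem_iUnion.2 ⟨⟨x, hx⟩, hVt _⟩
  obtain ⟨δ, hδ0, hball⟩ := lebesgue_number_lemma_of_metric isCompact_Icc hVopen hcover
  obtain ⟨N, hN⟩ : ∃ N : ℕ, (1:ℝ)/δ < N := exists_nat_gt _
  have hN0 : 0 < N := by
    rcases Nat.eq_zero_or_pos N with rfl | h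
    · exfalso
      rw [Nat.cast_zero] at hN
      have : (0:ℝ) < 1/δ := by positivity
      linarith
    · exact h
  have hNpos : (0:ℝ) < N := Nat.cast_pos.2 hN0
  have hNδ : (1:ℝ)/N < δ := by
    rw [div_lt_iff₀ hNpos]
    rw [div_lt_iff₀ hδ0] at hN
    nlinarith
  have hmid : ∀ j : ℕ, j < N → ((j:ℝ) + 2⁻¹)/N ∈ Set.Icc (0:ℝ) 1 := by
    intro j hj
    have hj1 : (j:ℝ) + 1 ≤ N := by exact_mod_cast Nat.succ_le_of_lt hj
    constructor
    · positivity
    · rw [div_le_one hNpos]; linarith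
  have hchoice : ∀ j : ℕ, j < N → ∃ i, Metric.ball (((j:ℝ) + 2⁻¹)/N) δ ⊆ V i :=
    fun j hj => hball _ (hmid j hj)
  choose idx hidx using hchoice
  refine ⟨N, fun j => (j : ℝ) / N, fun j => if h : j < N then ε (idx j h) else 1, hN0,
    by simp, div_self hNpos.ne', ?_, ?_⟩
  · intro j hj
    have : (j:ℝ) < (j:ℝ) + 1 := by linarith
    have h2 : ((j:ℕ)+1 : ℕ) = ((j:ℝ) + 1 : ℝ) → True := fun _ => trivial
    rw [div_lt_div_iff_of_pos_right hNpos]  -- may not exist; fallback below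
    push_cast
    linarith
  · intro j hj
    simp only [dif_pos hj]
    refine ⟨hε0 _, hεπ _, ?_⟩
    intro s hs
    have hj1 : (j:ℝ) + 1 ≤ N := by exact_mod_cast Nat.succ_le_of_lt hj
    have hs1 : (j:ℝ)/N ≤ s := hs.1
    have hs2 : s ≤ ((j:ℝ) + 1)/N := by
      have := hs.2
      push_cast at this
      exact this
    have hs01 : s ∈ Set.Icc (0:ℝ) 1 := by
      constructor
      · have : (0:ℝ) ≤ (j:ℝ)/N := by positivity
        linarith
      · have : ((j:ℝ)+1)/N ≤ 1 := by rw [div_le_one hNpos]; linarith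
        linarith
    have hsball : s ∈ Metric.ball (((j:ℝ) + 2⁻¹)/N) δ := by
      rw [Metric.mem_ball, Real.dist_eq]
      have e1 : ((j:ℝ)+1)/N - ((j:ℝ)+2⁻¹)/N = 1/(2*N) := by field_simp; ring
      have e2 : ((j:ℝ)+2⁻¹)/N - (j:ℝ)/N = 1/(2*N) := by field_simp; ring
      have e3 : (1:ℝ)/(2*N) < δ := by
        have : (1:ℝ)/(2*N) ≤ 1/N := by
          apply div_le_div_of_nonneg_left (by norm_num) hNpos
          linarith
        linarith
      rw [abs_sub_lt_iff]
      constructor <;> linarith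
    obtain ⟨h1, h2, h3⟩ := hVP (idx j hj) s ⟨hidx j hj hsball, hs01⟩
    refine ⟨h1, h2, ?_⟩
    rw [← (dif_pos hj : (if h : j < N then ε (idx j h) else (1:ℝ)) = ε (idx j hj))] at h3
    exact h3
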